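/- For τ > 0, IS₂ > 0 fixed and IS₀ > 10·IS₂, with C = A·((IS₀ + IS₂ - τ)/τ)² where τ = IS₀ - IS₂ and A = 10, the WENO-ZN ratio (C + τ₈/IS₀)/(C + τ₈/IS₂) is at most the WENO-Z ratio (1 + τ/IS₀)/(1 + τ/IS₂) whenever τ₈ ≥ τ/2 and τ₈ ≤ 3τ, in the limiting regime IS₀/IS₂ → ∞ (both ratios tend to positive limits and the WENO-ZN limit is smaller). -/

import Mathlib

/-- Comparison of the contribution of a discontinuous sub-stencil: for
    IS₀ ≥ 10·IS₂ > 0, τ = IS₀ - IS₂, C = 10·(2IS₂/τ)², and any τ₈ with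
    τ/2 ≤ τ₈ ≤ 3τ, the WENO-ZN ratio is at most the WENO-Z ratio. -/
theorem wenoZN_ratio_le_wenoZ_ratio (IS0 IS2 τ8 : ℝ) (hIS2 : 0 < IS2)
    (h10 : 10 * IS2 ≤ IS0)
    (hτ8l : (IS0 - IS2) / 2 ≤ τ8) (hτ8u : τ8 ≤ 3 * (IS0 - IS2)) :
    let τ := IS0 - IS2
    let C := 10 * (2 * IS2 / τ)^2
    (C + τ8 / IS0) / (C + τ8 / IS2) ≤ (1 + τ / IS0) / (1 + τ / IS2) := by
  intro τ C
  have hτ : 0 < τ := by simp only [τ]; linarith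
  have hIS0 : 0 < IS0 := by linarith
  have hτ8 : 0 < τ8 := by simp only [τ] at *; linarith
  have hC : 0 < C := by simp only [C]; positivity
  have hτ9 : 9 * IS2 ≤ τ := by simp only [τ]; linarith
  have hkey : C * τ ≤ τ8 := by
    have hCτ : C * τ = 40 * IS2 ^ 2 / τ := by
      simp only [C]; field_simp; ring
    rw [hCτ, div_le_iff₀ hτ]
    nlinarith [sq_nonneg (τ - 9 * IS2)]
  rw [div_le_div_iff₀ (by positivity) (by positivity)]
  have h1 : τ8 / IS0 * (τ / IS2) = τ / IS0 * (τ8 / IS2) := by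
    field_simp
  have hlt : IS2 < IS0 := by simp only [τ] at hτ; linarith
  have hsub : 0 < 1/IS2 - 1/IS0 := by
    have := one_div_lt_one_div_of_lt hIS2 hlt
    linarith
  clear_value τ C
  have h2 : 0 ≤ (τ8 - C * τ) * (IS0 - IS2) :=
    mul_nonneg (by linarith) (by linarith)
  field_simp
  nlinarith [mul_nonneg (mul_nonneg h2 hIS0.le) hIS2.le, mul_pos hIS0 hIS2]
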